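/- arXiv:2512.21464 — 2 statements merged into one kernel-verified Lean document; each statement's English description precedes it below -/
import Mathlib

section
/- Let A, B ∈ ℝ^{n×n} be positive semidefinite. There exists a matrix T ∈ ℝ^{n×n} with T·A·Tᵀ = B and trace(A·T) = trace(√(√A·B·√A)) (i.e., an optimal transport matrix from A to B exists) if and only if rank(A) ≥ rank(B). Moreover, when rank(A) ≥ rank(B), such a T can be chosen to be symmetric. -/
open Matrix

/-- The positive semidefinite square root of a psd matrix (junk value `0` otherwise). -/
noncomputable def psdSqrt {n : ℕ} (M : Matrix (Fin n) (Fin n) ℝ) : Matrix (Fin n) (Fin n) ℝ :=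
  letI := Classical.propDecidable M.PosSemidef
  if h : M.PosSemidef then
    (h.1.eigenvectorUnitary : Matrix (Fin n) (Fin n) ℝ) * diagonal (Real.sqrt ∘ h.1.eigenvalues) *
      (star h.1.eigenvectorUnitary : Matrix (Fin n) (Fin n) ℝ)
  else 0

/-- `trace √(√A·B·√A)`. -/
noncomputable def sqrtTr {n : ℕ} (A B : Matrix (Fin n) (Fin n) ℝ) : ℝ :=
  (psdSqrt (psdSqrt A * B * psdSqrt A)).trace

/-- `T` is an optimal transport matrix from `A` to `B`. -/
def IsOT {n : ℕ} (A B T : Matrix (Fin n) (Fin n) ℝ) : Prop :=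
  T * A * Tᵀ = B ∧ (A * T).trace = sqrtTr A B

/-- Squared Bures–Wasserstein distance. -/
noncomputable def W2sq {n : ℕ} (A B : Matrix (Fin n) (Fin n) ℝ) : ℝ :=
  A.trace + B.trace - 2 * sqrtTr A B

section OTHelpers

open Matrix Finset Module
open scoped RealInnerProductSpace

namespace OTProof



variable {n : ℕ}

noncomputable def specF {X : Matrix (Fin n) (Fin n) ℝ} (hX : X.IsHermitian) (φ : ℝ → ℝ) :
    Matrix (Fin n) (Fin n) ℝ :=
  (hX.eigenvectorUnitary : Matrix (Fin n) (Fin n) ℝ) * diagonal (φ ∘ hX.eigenvalues) *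
    star (hX.eigenvectorUnitary : Matrix (Fin n) (Fin n) ℝ)

noncomputable def _root_.Matrix.PosSemidef.sqrt {X : Matrix (Fin n) (Fin n) ℝ}
    (hX : X.PosSemidef) : Matrix (Fin n) (Fin n) ℝ :=
  specF hX.1 Real.sqrt

lemma specF_mul {X : Matrix (Fin n) (Fin n) ℝ} (hX : X.IsHermitian) (φ ψ : ℝ → ℝ) :
    specF hX φ * specF hX ψ = specF hX (fun x => φ x * ψ x) := by
  have h : (star (hX.eigenvectorUnitary : Matrix (Fin n) (Fin n) ℝ)) *
      (hX.eigenvectorUnitary : Matrix (Fin n) (Fin n) ℝ) = 1 :=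
    Matrix.mem_unitaryGroup_iff'.mp (hX.eigenvectorUnitary).2
  have h2 : ∀ Z : Matrix (Fin n) (Fin n) ℝ,
      (star (hX.eigenvectorUnitary : Matrix (Fin n) (Fin n) ℝ)) *
      ((hX.eigenvectorUnitary : Matrix (Fin n) (Fin n) ℝ) * Z) = Z := by
    intro Z; rw [← Matrix.mul_assoc, h, Matrix.one_mul]
  unfold specF
  simp only [Matrix.mul_assoc]
  rw [h2, ← Matrix.mul_assoc (diagonal _) (diagonal _), diagonal_mul_diagonal]
  congr 2

lemma specF_conjT {X : Matrix (Fin n) (Fin n) ℝ} (hX : X.IsHermitian) (φ : ℝ → ℝ) :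
    (specF hX φ)ᴴ = specF hX φ := by
  unfold specF
  simp only [conjTranspose_mul, conjTranspose_conjTranspose, diagonal_conjTranspose,
    star_trivial, Matrix.mul_assoc, Matrix.star_eq_conjTranspose]

lemma specF_transpose {X : Matrix (Fin n) (Fin n) ℝ} (hX : X.IsHermitian) (φ : ℝ → ℝ) :
    (specF hX φ)ᵀ = specF hX φ := by
  rw [← conjTranspose_eq_transpose_of_trivial, specF_conjT]

lemma specF_id {X : Matrix (Fin n) (Fin n) ℝ} (hX : X.IsHermitian) :
    specF hX (fun x => x) = X := by
  conv_rhs => rw [hX.spectral_theorem]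
  rfl

lemma specF_sqrt {X : Matrix (Fin n) (Fin n) ℝ} (hX : X.PosSemidef) :
    hX.sqrt = specF hX.1 Real.sqrt := by
  rfl



variable {n : ℕ} {ι : Type*} [Fintype ι]

lemma ext_mulVec {X Y : Matrix (Fin n) (Fin n) ℝ} (h : ∀ v, X *ᵥ v = Y *ᵥ v) : X = Y := by
  ext i j
  have := congr_fun (h (Pi.single j 1)) i
  simpa [Matrix.mulVec_single] using this

lemma mul_vecMulVec (D : Matrix (Fin n) (Fin n) ℝ) (u v : Fin n → ℝ) :
    D * vecMulVec u v = vecMulVec (D *ᵥ u) v := by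
  ext i j
  simp only [Matrix.mul_apply, vecMulVec_apply, Matrix.mulVec, dotProduct, Finset.sum_mul]
  exact Finset.sum_congr rfl fun k _ => by ring

lemma vecMulVec_mul (u v : Fin n → ℝ) (D : Matrix (Fin n) (Fin n) ℝ) :
    vecMulVec u v * D = vecMulVec u (Dᵀ *ᵥ v) := by
  ext i j
  simp only [Matrix.mul_apply, vecMulVec_apply, Matrix.mulVec, dotProduct, Finset.mul_sum,
    Matrix.transpose_apply]
  exact Finset.sum_congr rfl fun k _ => by ring

lemma vecMulVec_mul_vecMulVec (u v w z : Fin n → ℝ) :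
    vecMulVec u v * vecMulVec w z = (v ⬝ᵥ w) • vecMulVec u z := by
  ext i j
  simp only [Matrix.mul_apply, vecMulVec_apply, Matrix.smul_apply, dotProduct, Finset.sum_mul,
    smul_eq_mul, Finset.mul_sum]
  exact Finset.sum_congr rfl fun k _ => by ring

lemma vecMulVec_transpose (u v : Fin n → ℝ) :
    (vecMulVec u v)ᵀ = vecMulVec v u := by
  ext i j; simp [vecMulVec_apply, mul_comm]

lemma vecMulVec_zero_left (v : Fin n → ℝ) : vecMulVec (0 : Fin n → ℝ) v = 0 := by
  ext i j; simp [vecMulVec_apply]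

lemma vecMulVec_zero_right (u : Fin n → ℝ) : vecMulVec u (0 : Fin n → ℝ) = 0 := by
  ext i j; simp [vecMulVec_apply]

lemma vecMulVec_mulVec (u v x : Fin n → ℝ) :
    vecMulVec u v *ᵥ x = (v ⬝ᵥ x) • u := by
  ext i
  simp only [Matrix.mulVec, vecMulVec_apply, dotProduct, Pi.smul_apply, smul_eq_mul,
    Finset.sum_mul, Finset.mul_sum]
  exact Finset.sum_congr rfl fun k _ => by ring

lemma sum_mulVec (M : ι → Matrix (Fin n) (Fin n) ℝ) (v : Fin n → ℝ) :
    (∑ i, M i) *ᵥ v = ∑ i, (M i *ᵥ v) := by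
  ext x
  simp only [Matrix.mulVec, dotProduct, Finset.sum_apply, Matrix.sum_apply, Finset.sum_mul]
  exact Finset.sum_comm

lemma transpose_sum (M : ι → Matrix (Fin n) (Fin n) ℝ) :
    (∑ i, M i)ᵀ = ∑ i, (M i)ᵀ := by
  ext x y; simp [Matrix.transpose_apply, Matrix.sum_apply]

lemma dot_shift (D : Matrix (Fin n) (Fin n) ℝ) (u v : Fin n → ℝ) :
    u ⬝ᵥ (D *ᵥ v) = (Dᵀ *ᵥ u) ⬝ᵥ v := by
  rw [Matrix.dotProduct_mulVec, ← Matrix.vecMul_transpose, Matrix.transpose_transpose]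

lemma sqfactor_kernel {S : Matrix (Fin n) (Fin n) ℝ} (hS : Sᵀ = S) {u : Fin n → ℝ}
    (h : (S * S) *ᵥ u = 0) : S *ᵥ u = 0 := by
  have h1 : (S *ᵥ u) ⬝ᵥ (S *ᵥ u) = 0 := by
    rw [dot_shift, hS, Matrix.mulVec_mulVec, h, zero_dotProduct]
  exact dotProduct_self_eq_zero.mp h1

lemma mul_transpose_self_eq_zero {X : Matrix (Fin n) (Fin n) ℝ} (h : X * Xᵀ = 0) : X = 0 := by
  have : (Xᵀ)ᴴ * Xᵀ = 0 := by
    rw [conjTranspose_eq_transpose_of_trivial, Matrix.transpose_transpose, h]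
  have h2 := Matrix.conjTranspose_mul_self_eq_zero.mp this
  rw [← Matrix.transpose_transpose X, h2, Matrix.transpose_zero]



variable {n : ℕ}

noncomputable def eE {n : ℕ} : EuclideanSpace ℝ (Fin n) ≃ₗ[ℝ] (Fin n → ℝ) :=
  WithLp.linearEquiv 2 ℝ (Fin n → ℝ)

lemma inner_eq_dot (x y : EuclideanSpace ℝ (Fin n)) : ⟪x, y⟫ = eE x ⬝ᵥ eE y := by
  simp [PiLp.inner_apply, RCLike.inner_apply, dotProduct, eE, WithLp.linearEquiv,
    WithLp.equiv, mul_comm]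

noncomputable def mker (X : Matrix (Fin n) (Fin n) ℝ) : Submodule ℝ (EuclideanSpace ℝ (Fin n)) :=
  LinearMap.ker (Matrix.toEuclideanLin X)

lemma mem_mker {X : Matrix (Fin n) (Fin n) ℝ} {x : EuclideanSpace ℝ (Fin n)} :
    x ∈ mker X ↔ X *ᵥ eE x = 0 := by
  rw [mker, LinearMap.mem_ker, Matrix.toEuclideanLin_apply]
  constructor
  · intro h
    have := congrArg WithLp.ofLp h
    exact this
  · intro h
    have : X *ᵥ (WithLp.equiv 2 (Fin n → ℝ)) x = 0 := h
    exact congrArg (WithLp.toLp 2) this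

lemma finrank_mker_add_rank (X : Matrix (Fin n) (Fin n) ℝ) :
    finrank ℝ (mker X) + X.rank = n := by
  have h1 : X.rank = finrank ℝ (LinearMap.range (Matrix.toEuclideanLin X)) := by
    rw [Matrix.rank_eq_finrank_range_toLin X (PiLp.basisFun 2 ℝ (Fin n))
      (PiLp.basisFun 2 ℝ (Fin n))]
    rfl
  have h2 := LinearMap.finrank_range_add_finrank_ker (Matrix.toEuclideanLin X)
  rw [finrank_euclideanSpace_fin] at h2
  rw [mker, h1]
  omega

noncomputable def onbFam (S : Submodule ℝ (EuclideanSpace ℝ (Fin n))) :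
    Fin (finrank ℝ S) → (Fin n → ℝ) :=
  fun i => eE ((stdOrthonormalBasis ℝ S i : EuclideanSpace ℝ (Fin n)))

lemma onbFam_mem (S : Submodule ℝ (EuclideanSpace ℝ (Fin n))) (i) :
    eE.symm (onbFam S i) ∈ S := by
  simp only [onbFam, LinearEquiv.symm_apply_apply]
  exact (stdOrthonormalBasis ℝ S i).2

lemma onbFam_dot (S : Submodule ℝ (EuclideanSpace ℝ (Fin n))) (i j) :
    onbFam S i ⬝ᵥ onbFam S j = if i = j then 1 else 0 := by
  have h0 := (stdOrthonormalBasis ℝ S).orthonormal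
  rw [orthonormal_iff_ite] at h0
  have h := h0 i j
  rw [Submodule.coe_inner, inner_eq_dot] at h
  exact h

lemma onbFam_expand (S : Submodule ℝ (EuclideanSpace ℝ (Fin n)))
    {y : EuclideanSpace ℝ (Fin n)} (hy : y ∈ S) :
    ∑ i, (onbFam S i ⬝ᵥ eE y) • onbFam S i = eE y := by
  have h := (stdOrthonormalBasis ℝ S).sum_repr' ⟨y, hy⟩
  have h2 := congrArg (fun z : S => eE (z : EuclideanSpace ℝ (Fin n))) h
  simp only [AddSubmonoidClass.coe_finset_sum, SetLike.val_smul, map_sum,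
    _root_.map_smul] at h2
  refine Eq.trans (Finset.sum_congr rfl fun i _ => ?_) h2
  congr 1
  rw [Submodule.coe_inner, inner_eq_dot]; rfl

noncomputable def indf : ℝ → ℝ := fun x => if x = 0 then 0 else 1
noncomputable def pisf : ℝ → ℝ := fun x => if x = 0 then 0 else (Real.sqrt x)⁻¹

lemma specF_eq {X : Matrix (Fin n) (Fin n) ℝ} (hX : X.IsHermitian) {φ ψ : ℝ → ℝ}
    (h : ∀ i, φ (hX.eigenvalues i) = ψ (hX.eigenvalues i)) : specF hX φ = specF hX ψ := by
  have hfun : φ ∘ hX.eigenvalues = ψ ∘ hX.eigenvalues := funext h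
  unfold specF
  rw [hfun]

lemma _root_.Matrix.PosSemidef.sqrt_mul_self {X : Matrix (Fin n) (Fin n) ℝ}
    (hX : X.PosSemidef) : hX.sqrt * hX.sqrt = X := by
  rw [specF_sqrt hX, specF_mul]
  conv_rhs => rw [← specF_id hX.1]
  exact specF_eq _ fun i => Real.mul_self_sqrt (hX.eigenvalues_nonneg i)

lemma _root_.Matrix.PosSemidef.posSemidef_sqrt {X : Matrix (Fin n) (Fin n) ℝ}
    (hX : X.PosSemidef) : hX.sqrt.PosSemidef := by
  rw [specF_sqrt hX]
  unfold specF
  rw [Matrix.star_eq_conjTranspose]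
  apply Matrix.PosSemidef.mul_mul_conjTranspose_same
  rw [posSemidef_diagonal_iff]
  intro i
  exact Real.sqrt_nonneg _

variable {X : Matrix (Fin n) (Fin n) ℝ} (hX : X.PosSemidef)

lemma sqrt_transpose : hX.sqrtᵀ = hX.sqrt := by
  rw [specF_sqrt hX]; exact specF_transpose _ _

lemma sqrt_mul_indf : hX.sqrt * specF hX.1 indf = hX.sqrt := by
  rw [specF_sqrt hX, specF_mul]
  exact specF_eq _ fun i => by
    by_cases h : hX.1.eigenvalues i = 0 <;> simp [indf, h]

lemma indf_mul_sqrt : specF hX.1 indf * hX.sqrt = hX.sqrt := by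
  rw [specF_sqrt hX, specF_mul]
  exact specF_eq _ fun i => by
    by_cases h : hX.1.eigenvalues i = 0 <;> simp [indf, h]

lemma sqrt_mul_pisf : hX.sqrt * specF hX.1 pisf = specF hX.1 indf := by
  rw [specF_sqrt hX, specF_mul]
  refine specF_eq _ fun i => ?_
  by_cases h : hX.1.eigenvalues i = 0
  · simp [pisf, indf, h]
  · have hpos : 0 < hX.1.eigenvalues i := lt_of_le_of_ne (hX.eigenvalues_nonneg i) (Ne.symm h)
    have hs : Real.sqrt (hX.1.eigenvalues i) ≠ 0 := by
      rw [Real.sqrt_ne_zero']; exact hpos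
    simp [pisf, indf, h, mul_inv_cancel₀ hs]

lemma pisf_mul_sqrt : specF hX.1 pisf * hX.sqrt = specF hX.1 indf := by
  rw [specF_sqrt hX, specF_mul]
  refine specF_eq _ fun i => ?_
  by_cases h : hX.1.eigenvalues i = 0
  · simp [pisf, indf, h]
  · have hpos : 0 < hX.1.eigenvalues i := lt_of_le_of_ne (hX.eigenvalues_nonneg i) (Ne.symm h)
    have hs : Real.sqrt (hX.1.eigenvalues i) ≠ 0 := by
      rw [Real.sqrt_ne_zero']; exact hpos
    simp [pisf, indf, h, inv_mul_cancel₀ hs]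

lemma x_mul_pisf : X * specF hX.1 pisf = hX.sqrt :=
  calc X * specF hX.1 pisf = hX.sqrt * hX.sqrt * specF hX.1 pisf := by
        rw [Matrix.PosSemidef.sqrt_mul_self]
    _ = hX.sqrt * (hX.sqrt * specF hX.1 pisf) := by rw [Matrix.mul_assoc]
    _ = hX.sqrt * specF hX.1 indf := by rw [sqrt_mul_pisf]
    _ = hX.sqrt := sqrt_mul_indf hX

lemma pisf_mul_x : specF hX.1 pisf * X = hX.sqrt :=
  calc specF hX.1 pisf * X = specF hX.1 pisf * (hX.sqrt * hX.sqrt) := by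
        rw [Matrix.PosSemidef.sqrt_mul_self]
    _ = specF hX.1 pisf * hX.sqrt * hX.sqrt := by rw [Matrix.mul_assoc]
    _ = specF hX.1 indf * hX.sqrt := by rw [pisf_mul_sqrt]
    _ = hX.sqrt := indf_mul_sqrt hX

lemma x_mul_indf : X * specF hX.1 indf = X :=
  calc X * specF hX.1 indf = hX.sqrt * hX.sqrt * specF hX.1 indf := by
        rw [Matrix.PosSemidef.sqrt_mul_self]
    _ = hX.sqrt * (hX.sqrt * specF hX.1 indf) := by rw [Matrix.mul_assoc]
    _ = hX.sqrt * hX.sqrt := by rw [sqrt_mul_indf]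
    _ = X := hX.sqrt_mul_self

lemma indf_mul_indf : specF hX.1 indf * specF hX.1 indf = specF hX.1 indf := by
  rw [specF_mul]
  exact specF_eq _ fun i => by
    by_cases h : hX.1.eigenvalues i = 0 <;> simp [indf, h]

lemma pisf_pisf_sqrt : specF hX.1 pisf * specF hX.1 pisf * hX.sqrt = specF hX.1 pisf := by
  rw [specF_sqrt hX, specF_mul, specF_mul]
  refine specF_eq _ fun i => ?_
  by_cases h : hX.1.eigenvalues i = 0
  · simp [pisf, h]
  · have hnn := hX.eigenvalues_nonneg i
    have hs : Real.sqrt (hX.1.eigenvalues i) ≠ 0 := by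
      rw [Real.sqrt_ne_zero']; exact lt_of_le_of_ne hnn (Ne.symm h)
    simp only [pisf, if_neg h]
    field_simp

section Key

variable {A B : Matrix (Fin n) (Fin n) ℝ}

lemma key (hA : A.PosSemidef) (hB : B.PosSemidef)
    (hr : B.rank ≤ A.rank) (hM : (hA.sqrt * B * hA.sqrt).PosSemidef) :
    ∃ T : Matrix (Fin n) (Fin n) ℝ,
      T * A * Tᵀ = B ∧ (A * T).trace = hM.sqrt.trace ∧ T.IsSymm := by
  classical
  obtain ⟨SA, hSAdef⟩ : ∃ SA, hA.sqrt = SA := ⟨_, rfl⟩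
  obtain ⟨SB, hSBdef⟩ : ∃ SB, hB.sqrt = SB := ⟨_, rfl⟩
  obtain ⟨N, hNdef⟩ : ∃ N, hM.sqrt = N := ⟨_, rfl⟩
  obtain ⟨P, hPdef⟩ : ∃ P, specF hA.1 indf = P := ⟨_, rfl⟩
  obtain ⟨R, hRdef⟩ : ∃ R, specF hA.1 pisf = R := ⟨_, rfl⟩
  obtain ⟨Q, hQdef⟩ : ∃ Q, specF hM.1 indf = Q := ⟨_, rfl⟩
  obtain ⟨N', hN'def⟩ : ∃ N', specF hM.1 pisf = N' := ⟨_, rfl⟩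
  set M : Matrix (Fin n) (Fin n) ℝ := SA * B * SA with hMdef
  set Y : Matrix (Fin n) (Fin n) ℝ := SA * SB with hYdef
  -- basic identities
  have hSAP : SA * P = SA := by rw [← hSAdef, ← hPdef]; exact sqrt_mul_indf hA
  have hPSA : P * SA = SA := by rw [← hSAdef, ← hPdef]; exact indf_mul_sqrt hA
  have hSAR : SA * R = P := by rw [← hSAdef, ← hRdef, ← hPdef]; exact sqrt_mul_pisf hA
  have hRSA : R * SA = P := by rw [← hSAdef, ← hRdef, ← hPdef]; exact pisf_mul_sqrt hA
  have hAR : A * R = SA := by rw [← hSAdef, ← hRdef]; exact x_mul_pisf hA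
  have hRA : R * A = SA := by rw [← hSAdef, ← hRdef]; exact pisf_mul_x hA
  have hAP : A * P = A := by rw [← hPdef]; exact x_mul_indf hA
  have hPP : P * P = P := by rw [← hPdef]; exact indf_mul_indf hA
  have hPt : Pᵀ = P := by rw [← hPdef]; exact specF_transpose _ _
  have hRt : Rᵀ = R := by rw [← hRdef]; exact specF_transpose _ _
  have hQt : Qᵀ = Q := by rw [← hQdef]; exact specF_transpose _ _
  have hSAt : SAᵀ = SA := by rw [← hSAdef]; exact sqrt_transpose hA
  have hSBt : SBᵀ = SB := by rw [← hSBdef]; exact sqrt_transpose hB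
  have hNt : Nᵀ = N := by rw [← hNdef]; exact sqrt_transpose hM
  have hSS : SA * SA = A := by rw [← hSAdef]; exact hA.sqrt_mul_self
  have hSBSB : SB * SB = B := by rw [← hSBdef]; exact hB.sqrt_mul_self
  have hNN : N * N = M := by
    rw [← hNdef, hMdef, ← hSAdef]; exact hM.sqrt_mul_self
  have hNQ : N * Q = N := by rw [← hNdef, ← hQdef]; exact sqrt_mul_indf hM
  have hQN : Q * N = N := by rw [← hNdef, ← hQdef]; exact indf_mul_sqrt hM
  have hNN' : N * N' = Q := by rw [← hNdef, ← hN'def, ← hQdef]; exact sqrt_mul_pisf hM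
  have hN'N : N' * N = Q := by rw [← hNdef, ← hN'def, ← hQdef]; exact pisf_mul_sqrt hM
  have hMN' : M * N' = N := by
    rw [← hNdef, ← hN'def, hMdef, ← hSAdef]; exact x_mul_pisf hM
  have hN'N'N : N' * N' * N = N' := by rw [← hNdef, ← hN'def]; exact pisf_pisf_sqrt hM
  have hQQ : Q * Q = Q := by rw [← hQdef]; exact indf_mul_indf hM
  have hBt : Bᵀ = B := (conjTranspose_eq_transpose_of_trivial B).symm.trans hB.1
  -- derived identities
  have hMP : M * P = M := by
    rw [hMdef, Matrix.mul_assoc (SA * B) SA P, hSAP]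
  have hM1P : M * (1 - P) = 0 := by rw [Matrix.mul_sub, Matrix.mul_one, hMP, sub_self]
  have hN1P : N * (1 - P) = 0 := by
    have hz : (N * (1 - P))ᵀ * (N * (1 - P)) = 0 := by
      rw [transpose_mul, hNt, Matrix.mul_assoc, ← Matrix.mul_assoc N N (1 - P), hNN, hM1P,
        Matrix.mul_zero]
    have hz2 : (N * (1 - P))ᴴ * (N * (1 - P)) = 0 := by
      rw [conjTranspose_eq_transpose_of_trivial]; exact hz
    exact Matrix.conjTranspose_mul_self_eq_zero.mp hz2
  have hNP : N * P = N := by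
    have := hN1P; rw [Matrix.mul_sub, Matrix.mul_one, sub_eq_zero] at this
    exact this.symm
  have hPN : P * N = N := by
    have := congrArg Matrix.transpose hNP
    rwa [transpose_mul, hPt, hNt] at this
  have hYYt : Y * Yᵀ = M := by
    rw [hYdef, transpose_mul, hSAt, hSBt, Matrix.mul_assoc, ← Matrix.mul_assoc SB SB SA,
      hSBSB, hMdef, Matrix.mul_assoc]
  have hN1Q : N * (1 - Q) = 0 := by rw [Matrix.mul_sub, Matrix.mul_one, hNQ, sub_self]
  have hM1Q : M * (1 - Q) = 0 := by
    rw [← hNN, Matrix.mul_assoc, hN1Q, Matrix.mul_zero]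
  have h1Qt : (1 - Q)ᵀ = 1 - Q := by rw [transpose_sub, transpose_one, hQt]
  have hQY : Q * Y = Y := by
    have hz : ((1 - Q) * Y) * ((1 - Q) * Y)ᵀ = 0 := by
      rw [transpose_mul, h1Qt, Matrix.mul_assoc, ← Matrix.mul_assoc Y Yᵀ (1 - Q), hYYt, hM1Q,
        Matrix.mul_zero]
    have hz2 := mul_transpose_self_eq_zero hz
    rw [Matrix.sub_mul, Matrix.one_mul, sub_eq_zero] at hz2
    exact hz2.symm
  have hN'1P : N' * (1 - P) = 0 := by
    rw [← hN'N'N, Matrix.mul_assoc (N' * N') N (1 - P), hN1P, Matrix.mul_zero]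
  -- pointwise kernel lemmas
  have kA_kSA : ∀ u, A *ᵥ u = 0 → SA *ᵥ u = 0 := by
    intro u h
    exact sqfactor_kernel hSAt (by rw [hSS]; exact h)
  have kA_kN : ∀ u, A *ᵥ u = 0 → N *ᵥ u = 0 := by
    intro u h
    have hMu : M *ᵥ u = 0 := by
      rw [hMdef, Matrix.mul_assoc, ← Matrix.mulVec_mulVec, ← Matrix.mulVec_mulVec,
        kA_kSA u h, Matrix.mulVec_zero, Matrix.mulVec_zero]
    exact sqfactor_kernel hNt (by rw [hNN]; exact hMu)
  have kB_kSB : ∀ u, B *ᵥ u = 0 → SB *ᵥ u = 0 := by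
    intro u h
    exact sqfactor_kernel hSBt (by rw [hSBSB]; exact h)
  have kSB_kB : ∀ u, SB *ᵥ u = 0 → B *ᵥ u = 0 := by
    intro u h
    rw [← hSBSB, ← Matrix.mulVec_mulVec, h, Matrix.mulVec_zero]
  have kSB_kY : ∀ u, SB *ᵥ u = 0 → Y *ᵥ u = 0 := by
    intro u h
    rw [hYdef, ← Matrix.mulVec_mulVec, h, Matrix.mulVec_zero]
  have kN_kYt : ∀ u, N *ᵥ u = 0 → Yᵀ *ᵥ u = 0 := by
    intro u h
    have hMu : M *ᵥ u = 0 := by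
      rw [← hNN, ← Matrix.mulVec_mulVec, h, Matrix.mulVec_zero]
    have hd : (Yᵀ *ᵥ u) ⬝ᵥ (Yᵀ *ᵥ u) = 0 := by
      rw [dot_shift, Matrix.transpose_transpose, Matrix.mulVec_mulVec, hYYt, hMu,
        zero_dotProduct]
    exact dotProduct_self_eq_zero.mp hd
  have kYt_kN : ∀ u, Yᵀ *ᵥ u = 0 → N *ᵥ u = 0 := by
    intro u h
    have hMu : M *ᵥ u = 0 := by
      rw [← hYYt, ← Matrix.mulVec_mulVec, h, Matrix.mulVec_zero]
    exact sqfactor_kernel hNt (by rw [hNN]; exact hMu)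
  -- kernels as submodules
  have memKA : ∀ u : Fin n → ℝ, eE.symm u ∈ mker A ↔ A *ᵥ u = 0 := by
    intro u; rw [mem_mker, LinearEquiv.apply_symm_apply]
  have memKN : ∀ u : Fin n → ℝ, eE.symm u ∈ mker N ↔ N *ᵥ u = 0 := by
    intro u; rw [mem_mker, LinearEquiv.apply_symm_apply]
  have memKSB : ∀ u : Fin n → ℝ, eE.symm u ∈ mker SB ↔ SB *ᵥ u = 0 := by
    intro u; rw [mem_mker, LinearEquiv.apply_symm_apply]
  have memKY : ∀ u : Fin n → ℝ, eE.symm u ∈ mker Y ↔ Y *ᵥ u = 0 := by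
    intro u; rw [mem_mker, LinearEquiv.apply_symm_apply]
  have hKAKN : mker A ≤ mker N := by
    intro x hx
    rw [mem_mker] at hx ⊢
    exact kA_kN _ hx
  have hKSBKY : mker SB ≤ mker Y := by
    intro x hx
    rw [mem_mker] at hx ⊢
    exact kSB_kY _ hx
  have hKSB_eq : mker SB = mker B := by
    ext x
    rw [mem_mker, mem_mker]
    exact ⟨fun h => kSB_kB _ h, fun h => kB_kSB _ h⟩
  have hKN_eq : mker N = mker Yᵀ := by
    ext x
    rw [mem_mker, mem_mker]
    exact ⟨fun h => kN_kYt _ h, fun h => kYt_kN _ h⟩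
  -- dimension counting
  have cA := finrank_mker_add_rank A
  have cB := finrank_mker_add_rank B
  have cY := finrank_mker_add_rank Y
  have cYt := finrank_mker_add_rank Yᵀ
  have hrkYt : Yᵀ.rank = Y.rank := Matrix.rank_transpose Y
  have hKYKN : finrank ℝ (mker Y) = finrank ℝ (mker N) := by
    rw [hKN_eq]; omega
  have count1 : finrank ℝ (mker A) ≤ finrank ℝ (mker SB) := by
    rw [hKSB_eq]; omega
  set a := finrank ℝ (mker A) with hadef
  set C1 : Submodule ℝ (EuclideanSpace ℝ (Fin n)) := (mker A)ᗮ ⊓ mker N with hC1def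
  set c := finrank ℝ C1 with hcdef
  have countC1 : a + c = finrank ℝ (mker N) :=
    Submodule.finrank_add_inf_finrank_orthogonal hKAKN
  -- the families
  set f₁ : Fin a → (Fin n → ℝ) := onbFam (mker A) with hf₁def
  set f₂ : Fin c → (Fin n → ℝ) := onbFam C1 with hf₂def
  set g₁ : Fin a → (Fin n → ℝ) := fun i => onbFam (mker SB) (Fin.castLE count1 i) with hg₁def
  set SpanG : Submodule ℝ (EuclideanSpace ℝ (Fin n)) :=
    Submodule.span ℝ (Set.range fun i => eE.symm (g₁ i)) with hSpanGdef
  have hg₁mem : ∀ i, eE.symm (g₁ i) ∈ mker SB := fun i => onbFam_mem _ _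
  have hSpanG_le : SpanG ≤ mker Y := by
    rw [hSpanGdef, Submodule.span_le]
    rintro x ⟨i, rfl⟩
    exact hKSBKY (hg₁mem i)
  have hg₁dot : ∀ i j, g₁ i ⬝ᵥ g₁ j = if i = j then 1 else 0 := by
    intro i j
    rw [hg₁def]
    simp only []
    rw [onbFam_dot]
    congr 1
    simp [Fin.castLE_inj]
  have hg₁on : Orthonormal ℝ (fun i => eE.symm (g₁ i)) := by
    rw [orthonormal_iff_ite]
    intro i j
    rw [inner_eq_dot, LinearEquiv.apply_symm_apply, LinearEquiv.apply_symm_apply, hg₁dot]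
  have hfrSpanG : finrank ℝ SpanG = a := by
    rw [hSpanGdef, finrank_span_eq_card hg₁on.linearIndependent, Fintype.card_fin]
  set D2 : Submodule ℝ (EuclideanSpace ℝ (Fin n)) := SpanGᗮ ⊓ mker Y with hD2def
  have countD2' : finrank ℝ SpanG + finrank ℝ D2 = finrank ℝ (mker Y) :=
    Submodule.finrank_add_inf_finrank_orthogonal hSpanG_le
  have countD2 : finrank ℝ D2 = c := by omega
  set g₂ : Fin c → (Fin n → ℝ) := fun i => onbFam D2 (finCongr countD2.symm i) with hg₂def
  -- family membership facts
  have hf₁memKA : ∀ i, eE.symm (f₁ i) ∈ mker A := fun i => onbFam_mem _ _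
  have hf₁A : ∀ i, A *ᵥ f₁ i = 0 := fun i => (memKA _).mp (hf₁memKA i)
  have hf₁N : ∀ i, N *ᵥ f₁ i = 0 := fun i => kA_kN _ (hf₁A i)
  have hf₂memC1 : ∀ i, eE.symm (f₂ i) ∈ C1 := fun i => onbFam_mem _ _
  have hf₂N : ∀ i, N *ᵥ f₂ i = 0 := fun i => (memKN _).mp (hf₂memC1 i).2
  have hf₂orth : ∀ i u, A *ᵥ u = 0 → u ⬝ᵥ f₂ i = 0 := by
    intro i u hu
    have h := (Submodule.mem_orthogonal _ _).mp (hf₂memC1 i).1 (eE.symm u) ((memKA u).mpr hu)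
    rw [inner_eq_dot, LinearEquiv.apply_symm_apply, LinearEquiv.apply_symm_apply] at h
    exact h
  have hg₁SB : ∀ i, SB *ᵥ g₁ i = 0 := fun i => (memKSB _).mp (hg₁mem i)
  have hg₁Y : ∀ i, Y *ᵥ g₁ i = 0 := fun i => kSB_kY _ (hg₁SB i)
  have hg₂memD2 : ∀ i, eE.symm (g₂ i) ∈ D2 := fun i => onbFam_mem _ _
  have hg₂Y : ∀ i, Y *ᵥ g₂ i = 0 := fun i => (memKY _).mp (hg₂memD2 i).2
  have hf₁dot : ∀ i j, f₁ i ⬝ᵥ f₁ j = if i = j then 1 else 0 := fun i j => onbFam_dot _ i j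
  have hf₂dot : ∀ i j, f₂ i ⬝ᵥ f₂ j = if i = j then 1 else 0 := fun i j => onbFam_dot _ i j
  have hg₂dot : ∀ i j, g₂ i ⬝ᵥ g₂ j = if i = j then 1 else 0 := by
    intro i j
    rw [hg₂def]
    simp only []
    rw [onbFam_dot]
    simp only [EmbeddingLike.apply_eq_iff_eq]
  have hg₁g₂ : ∀ i j, g₁ i ⬝ᵥ g₂ j = 0 := by
    intro i j
    have h := (Submodule.mem_orthogonal _ _).mp (hg₂memD2 j).1 (eE.symm (g₁ i))
      (Submodule.subset_span ⟨i, rfl⟩)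
    rw [inner_eq_dot, LinearEquiv.apply_symm_apply, LinearEquiv.apply_symm_apply] at h
    exact h
  have hg₂g₁ : ∀ i j, g₂ i ⬝ᵥ g₁ j = 0 := fun i j => by
    rw [dotProduct_comm]; exact hg₁g₂ j i
  have hQf : ∀ u, N *ᵥ u = 0 → Q *ᵥ u = 0 := by
    intro u h
    rw [← hN'N, ← Matrix.mulVec_mulVec, h, Matrix.mulVec_zero]
  have h1Pt : (1 - P)ᵀ = 1 - P := by rw [transpose_sub, transpose_one, hPt]
  have h1P1P : (1 - P) * (1 - P) = 1 - P := by
    rw [Matrix.sub_mul, Matrix.one_mul, Matrix.mul_sub, Matrix.mul_one, hPP, sub_self, sub_zero]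
  have hA1P : A * (1 - P) = 0 := by rw [Matrix.mul_sub, Matrix.mul_one, hAP, sub_self]
  have h1Pf₂ : ∀ i, (1 - P) *ᵥ f₂ i = 0 := by
    intro i
    have hw : A *ᵥ ((1 - P) *ᵥ f₂ i) = 0 := by
      rw [Matrix.mulVec_mulVec, hA1P, Matrix.zero_mulVec]
    have hd : ((1 - P) *ᵥ f₂ i) ⬝ᵥ ((1 - P) *ᵥ f₂ i) = 0 := by
      rw [dot_shift, h1Pt, Matrix.mulVec_mulVec, h1P1P]
      exact hf₂orth i _ hw
    exact dotProduct_self_eq_zero.mp hd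
  -- W construction
  set W₀ : Matrix (Fin n) (Fin n) ℝ := Yᵀ * N' with hW₀def
  set W₁ : Matrix (Fin n) (Fin n) ℝ :=
    (∑ i, vecMulVec (g₁ i) (f₁ i)) + (∑ i, vecMulVec (g₂ i) (f₂ i)) with hW₁def
  have hN't : N'ᵀ = N' := by rw [← hN'def]; exact specF_transpose _ _
  have hYW₀ : Y * W₀ = N := by rw [hW₀def, ← Matrix.mul_assoc, hYYt, hMN']
  have hW₀t : W₀ᵀ = N' * Y := by
    rw [hW₀def, transpose_mul, transpose_transpose, hN't]
  have hW₀tW₀ : W₀ᵀ * W₀ = Q := by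
    rw [hW₀t, hW₀def, Matrix.mul_assoc, ← Matrix.mul_assoc Y Yᵀ N', hYYt, hMN', hN'N]
  have hW₀1P : W₀ * (1 - P) = 0 := by
    rw [hW₀def, Matrix.mul_assoc, hN'1P, Matrix.mul_zero]
  have hYW₁ : Y * W₁ = 0 := by
    rw [hW₁def, Matrix.mul_add, Finset.mul_sum, Finset.mul_sum]
    simp only [mul_vecMulVec, hg₁Y, hg₂Y, vecMulVec_zero_left, Finset.sum_const_zero, add_zero]
  have hW₁Q : W₁ * Q = 0 := by
    have e1 : ∀ i : Fin a, Q *ᵥ f₁ i = 0 := fun i => hQf _ (hf₁N i)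
    have e2 : ∀ i : Fin c, Q *ᵥ f₂ i = 0 := fun i => hQf _ (hf₂N i)
    rw [hW₁def, Matrix.add_mul, Finset.sum_mul, Finset.sum_mul]
    simp only [vecMulVec_mul, hQt, e1, e2, vecMulVec_zero_right, Finset.sum_const_zero, add_zero]
  have hSBW₁1P : SB * W₁ * (1 - P) = 0 := by
    rw [hW₁def, Matrix.mul_add, Matrix.add_mul, Finset.mul_sum, Finset.sum_mul,
      Finset.mul_sum, Finset.sum_mul]
    simp only [mul_vecMulVec, hg₁SB, vecMulVec_zero_left, Matrix.zero_mul, vecMulVec_mul,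
      h1Pt, h1Pf₂, vecMulVec_zero_right, Finset.sum_const_zero, add_zero]
  have hW₁t : W₁ᵀ = (∑ i, vecMulVec (f₁ i) (g₁ i)) + (∑ i, vecMulVec (f₂ i) (g₂ i)) := by
    rw [hW₁def, transpose_add, transpose_sum, transpose_sum]
    simp only [vecMulVec_transpose]
  -- the projection sum identity
  have hproj : (∑ i, vecMulVec (f₁ i) (f₁ i)) + (∑ i, vecMulVec (f₂ i) (f₂ i)) = 1 - Q := by
    apply ext_mulVec
    intro v
    rw [Matrix.add_mulVec, sum_mulVec, sum_mulVec]
    simp only [vecMulVec_mulVec]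
    set w : Fin n → ℝ := v - Q *ᵥ v with hwdef
    have hNw : N *ᵥ w = 0 := by
      rw [hwdef, Matrix.mulVec_sub, Matrix.mulVec_mulVec, hNQ, sub_self]
    have hdotv : ∀ u, N *ᵥ u = 0 → u ⬝ᵥ v = u ⬝ᵥ w := by
      intro u hu
      rw [hwdef, dotProduct_sub, dot_shift, hQt, hQf u hu, zero_dotProduct, sub_zero]
    have hf₁v : ∀ i : Fin a, f₁ i ⬝ᵥ v = f₁ i ⬝ᵥ w := fun i => hdotv _ (hf₁N i)
    have hf₂v : ∀ i : Fin c, f₂ i ⬝ᵥ v = f₂ i ⬝ᵥ w := fun i => hdotv _ (hf₂N i)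
    simp only [hf₁v, hf₂v]
    have hwKN : eE.symm w ∈ mker N := (memKN w).mpr hNw
    set y₁ : EuclideanSpace ℝ (Fin n) :=
      ((mker A).orthogonalProjectionOnto (eE.symm w) : EuclideanSpace ℝ (Fin n)) with hy₁def
    have hy₁KA : y₁ ∈ mker A := ((mker A).orthogonalProjectionOnto (eE.symm w)).2
    set y₂ : EuclideanSpace ℝ (Fin n) := eE.symm w - y₁ with hy₂def
    have hy₂orth : y₂ ∈ (mker A)ᗮ := Submodule.sub_starProjection_mem_orthogonal _
    have hy₂C1 : y₂ ∈ C1 :=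
      Submodule.mem_inf.mpr ⟨hy₂orth, Submodule.sub_mem _ hwKN (hKAKN hy₁KA)⟩
    have hsplit : w = eE y₁ + eE y₂ := by
      rw [hy₂def, map_sub, LinearEquiv.apply_symm_apply]
      abel
    have hc₁ : ∀ i : Fin a, f₁ i ⬝ᵥ w = f₁ i ⬝ᵥ eE y₁ := by
      intro i
      have h0 : f₁ i ⬝ᵥ eE y₂ = 0 := by
        have h := (Submodule.mem_orthogonal _ _).mp hy₂orth (eE.symm (f₁ i)) (hf₁memKA i)
        rw [inner_eq_dot, LinearEquiv.apply_symm_apply] at h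
        exact h
      rw [hsplit, dotProduct_add, h0, add_zero]
    have hc₂ : ∀ i : Fin c, f₂ i ⬝ᵥ w = f₂ i ⬝ᵥ eE y₂ := by
      intro i
      have h0 : f₂ i ⬝ᵥ eE y₁ = 0 := by
        rw [dotProduct_comm]
        exact hf₂orth i (eE y₁) ((memKA (eE y₁)).mp (by
          rw [LinearEquiv.symm_apply_apply]; exact hy₁KA))
      rw [hsplit, dotProduct_add, h0, zero_add]
    simp only [hc₁, hc₂]
    have hexp₁ : ∑ i : Fin a, (f₁ i ⬝ᵥ eE y₁) • f₁ i = eE y₁ := onbFam_expand _ hy₁KA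
    have hexp₂ : ∑ i : Fin c, (f₂ i ⬝ᵥ eE y₂) • f₂ i = eE y₂ := onbFam_expand _ hy₂C1
    rw [hexp₁, hexp₂, ← hsplit, Matrix.sub_mulVec, Matrix.one_mulVec]
  have hW₁tW₁ : W₁ᵀ * W₁ = 1 - Q := by
    rw [hW₁t, hW₁def, Matrix.add_mul, Matrix.mul_add, Matrix.mul_add,
      Finset.sum_mul_sum, Finset.sum_mul_sum, Finset.sum_mul_sum, Finset.sum_mul_sum]
    simp only [vecMulVec_mul_vecMulVec, hg₁dot, hg₂dot, hg₁g₂, hg₂g₁, ite_smul, one_smul,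
      zero_smul, Finset.sum_ite_eq, Finset.mem_univ, if_true, Finset.sum_const_zero,
      add_zero, zero_add]
    exact hproj
  set W : Matrix (Fin n) (Fin n) ℝ := W₀ + W₁ with hWdef
  have hW₀tW₁ : W₀ᵀ * W₁ = 0 := by rw [hW₀t, Matrix.mul_assoc, hYW₁, Matrix.mul_zero]
  have hW₁tW₀ : W₁ᵀ * W₀ = 0 := by
    have h := congrArg Matrix.transpose hW₀tW₁
    rwa [transpose_mul, transpose_transpose, transpose_zero] at h
  have hWtW : Wᵀ * W = 1 := by
    rw [hWdef, transpose_add, Matrix.add_mul, Matrix.mul_add W₀ᵀ W₀ W₁,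
      Matrix.mul_add W₁ᵀ W₀ W₁, hW₀tW₀, hW₀tW₁, hW₁tW₀, hW₁tW₁]
    abel
  have hWWt : W * Wᵀ = 1 := mul_eq_one_comm.mp hWtW
  set E : Matrix (Fin n) (Fin n) ℝ := SB * W with hEdef
  have hSAE : SA * E = N := by
    rw [hEdef, ← Matrix.mul_assoc, ← hYdef, hWdef, Matrix.mul_add, hYW₀, hYW₁, add_zero]
  have hEEt : E * Eᵀ = B := by
    rw [hEdef, transpose_mul, hSBt, Matrix.mul_assoc, ← Matrix.mul_assoc W Wᵀ SB, hWWt,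
      Matrix.one_mul, hSBSB]
  have hE1P : E * (1 - P) = 0 := by
    rw [hEdef, hWdef, Matrix.mul_add, Matrix.add_mul, Matrix.mul_assoc SB W₀ (1 - P),
      hW₀1P, Matrix.mul_zero, hSBW₁1P, zero_add]
  have hEP : E * P = E := by
    have h := hE1P
    rw [Matrix.mul_sub, Matrix.mul_one, sub_eq_zero] at h
    exact h.symm
  have hEtSA : Eᵀ * SA = N := by
    have h := congrArg Matrix.transpose hSAE
    rwa [transpose_mul, hSAt, hNt] at h
  have hPEt : P * Eᵀ = Eᵀ := by
    have h := congrArg Matrix.transpose hEP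
    rwa [transpose_mul, hPt] at h
  -- the transport map
  have hTt : (E * R + R * Eᵀ - R * N * R)ᵀ = E * R + R * Eᵀ - R * N * R := by
    simp only [transpose_sub, transpose_add, transpose_mul, transpose_transpose, hRt, hNt,
      ← Matrix.mul_assoc]
    abel
  have hTA : (E * R + R * Eᵀ - R * N * R) * A = E * SA := by
    have hEtA : Eᵀ * A = N * SA := by rw [← hSS, ← Matrix.mul_assoc, hEtSA]
    rw [Matrix.sub_mul, Matrix.add_mul, Matrix.mul_assoc E R A,
      Matrix.mul_assoc R Eᵀ A, hEtA, Matrix.mul_assoc (R * N) R A, hRA,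
      ← Matrix.mul_assoc R N SA]
    abel
  have hSAT : SA * (E * R + R * Eᵀ - R * N * R) = Eᵀ := by
    rw [Matrix.mul_sub, Matrix.mul_add, ← Matrix.mul_assoc SA E R, hSAE,
      ← Matrix.mul_assoc SA R Eᵀ, hSAR, hPEt, ← Matrix.mul_assoc SA (R * N) R,
      ← Matrix.mul_assoc SA R N, hSAR, hPN]
    abel
  refine ⟨E * R + R * Eᵀ - R * N * R, ?_, ?_, hTt⟩
  · rw [hTt, hTA, Matrix.mul_assoc, hSAT, hEEt]
  · have t1 : (A * (E * R)).trace = N.trace := by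
      rw [Matrix.trace_mul_comm, Matrix.mul_assoc E R A, hRA, Matrix.trace_mul_comm, hSAE]
    have t2 : (A * (R * Eᵀ)).trace = N.trace := by
      rw [← Matrix.mul_assoc A R Eᵀ, hAR, Matrix.trace_mul_comm, hEtSA]
    have t3 : (A * (R * N * R)).trace = N.trace := by
      rw [← Matrix.mul_assoc A (R * N) R, ← Matrix.mul_assoc A R N, hAR,
        Matrix.trace_mul_comm, ← Matrix.mul_assoc R SA N, hRSA, hPN]
    rw [hNdef, Matrix.mul_sub, Matrix.mul_add, Matrix.trace_sub, Matrix.trace_add, t1, t2, t3]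
    ring

end Key

end OTProof

end OTHelpers

/-- An optimal transport matrix from `A` to `B` exists iff
`rank A ≥ rank B`, in which case it can be chosen to be symmetric. -/
theorem stmt1 {n : ℕ} (A B : Matrix (Fin n) (Fin n) ℝ)
    (hA : A.PosSemidef) (hB : B.PosSemidef) :
    ((∃ T : Matrix (Fin n) (Fin n) ℝ, IsOT A B T) ↔ B.rank ≤ A.rank) ∧
      (B.rank ≤ A.rank → ∃ T : Matrix (Fin n) (Fin n) ℝ, IsOT A B T ∧ T.IsSymm) := by
  classical
  have hM : (hA.sqrt * B * hA.sqrt).PosSemidef := by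
    have h := hB.mul_mul_conjTranspose_same hA.sqrt
    rwa [hA.posSemidef_sqrt.1] at h
  have h1 : psdSqrt A = hA.sqrt := dif_pos hA
  have h2 : psdSqrt (hA.sqrt * B * hA.sqrt) = hM.sqrt := dif_pos hM
  have hsq : sqrtTr A B = hM.sqrt.trace := by
    rw [sqrtTr, h1, h2]
  have easy : ∀ T : Matrix (Fin n) (Fin n) ℝ, T * A * Tᵀ = B → B.rank ≤ A.rank := by
    intro T hT
    calc B.rank = (T * A * Tᵀ).rank := by rw [hT]
      _ ≤ (T * A).rank := Matrix.rank_mul_le_left _ _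
      _ ≤ A.rank := Matrix.rank_mul_le_right _ _
  have hard : B.rank ≤ A.rank → ∃ T : Matrix (Fin n) (Fin n) ℝ, IsOT A B T ∧ T.IsSymm := by
    intro hr
    obtain ⟨T, hT1, hT2, hT3⟩ := OTProof.key hA hB hr hM
    exact ⟨T, ⟨hT1, by rw [hsq]; exact hT2⟩, hT3⟩
  refine ⟨⟨fun ⟨T, hT⟩ => easy T hT.1, fun hr => ?_⟩, hard⟩
  obtain ⟨T, hT, _⟩ := hard hr
  exact ⟨T, hT⟩
end

section
/- Let A, B ∈ ℝ^{n×n} be positive semidefinite. The following are equivalent: (i) there exists a positive semidefinite matrix T with T·A·Tᵀ = B; (ii) there exists an optimal transport matrix from A to B, and any two optimal transport matrices T₁, T₂ from A to B satisfy T₁·A = T₂·A (i.e., they agree on range(A), hence N(0,A)-almost surely); (iii) range(B) = range(B·A); (iv) range(B) ∩ ker(A) = {0}. -/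
open Matrix

section Dev1
namespace OTAux
open scoped MatrixOrder

variable {n : ℕ}

abbrev Mat (n : ℕ) := Matrix (Fin n) (Fin n) ℝ

lemma psdSqrt_eq {M : Mat n} (h : M.PosSemidef) : psdSqrt M = CFC.sqrt M := by
  unfold psdSqrt
  rw [dif_pos h, CFC.sqrt_eq_cfc, cfc_nnreal_eq_real _ M, h.1.cfc_eq]
  simp only [IsHermitian.cfc, Unitary.conjStarAlgAut_apply]
  congr 2
  ext i j
  by_cases hij : i = j
  · subst hij
    simp [Real.coe_sqrt, Real.coe_toNNReal', max_eq_left (h.eigenvalues_nonneg i)]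
  · simp [hij]

lemma psdSqrt_posSemidef {M : Mat n} (h : M.PosSemidef) : (psdSqrt M).PosSemidef := by
  rw [psdSqrt_eq h]; exact nonneg_iff_posSemidef.mp (CFC.sqrt_nonneg M)

lemma psdSqrt_mul_self {M : Mat n} (h : M.PosSemidef) : psdSqrt M * psdSqrt M = M := by
  rw [psdSqrt_eq h]; exact CFC.sqrt_mul_sqrt_self M h.nonneg

lemma eq_psdSqrt {X M : Mat n} (hX : X.PosSemidef) (hM : M.PosSemidef)
    (h : X * X = M) : X = psdSqrt M := by
  rw [psdSqrt_eq hM]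
  exact ((CFC.sqrt_eq_iff M X hM.nonneg hX.nonneg).mpr h).symm

lemma transpose_of_posSemidef {M : Mat n} (h : M.PosSemidef) : Mᵀ = M := h.1

/-- `range (M * N) ≤ range M`. -/
lemma range_mul_le (M N : Mat n) :
    LinearMap.range (M * N).mulVecLin ≤ LinearMap.range M.mulVecLin := by
  rw [Matrix.mulVecLin_mul]
  exact LinearMap.range_comp_le_range _ _

/-- `range (M * Mᵀ) = range M` over ℝ. -/
lemma range_mul_transpose_self (M : Mat n) :
    LinearMap.range (M * Mᵀ).mulVecLin = LinearMap.range M.mulVecLin := by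
  apply Submodule.eq_of_le_of_finrank_le (range_mul_le M Mᵀ)
  have h1 : (M * Mᵀ).rank = M.rank := Matrix.rank_self_mul_transpose M
  simpa [Matrix.rank] using h1.ge

lemma matrix_eq_of_mulVec_eq {M N : Mat n} (h : ∀ x, M *ᵥ x = N *ᵥ x) : M = N := by
  ext i j
  have := congrFun (h (Pi.single j 1)) i
  simpa [Matrix.mulVec_single] using this

end OTAux

end Dev1

section Dev2
namespace OTAux
variable {n : ℕ}

/-- For psd `M` over ℝ: `xᵀ M x = 0 → M x = 0`. -/
lemma psd_mulVec_eq_zero {M : Mat n} (hM : M.PosSemidef) {x : Fin n → ℝ}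
    (h : x ⬝ᵥ M *ᵥ x = 0) : M *ᵥ x = 0 := by
  have := (hM.dotProduct_mulVec_zero_iff x).mp (by simpa using h)
  exact this

lemma dotProduct_psdSqrt_sq {M : Mat n} (hM : M.PosSemidef) (x : Fin n → ℝ) :
    x ⬝ᵥ M *ᵥ x = (psdSqrt M *ᵥ x) ⬝ᵥ (psdSqrt M *ᵥ x) := by
  have hs := psdSqrt_posSemidef hM
  conv_lhs => rw [← psdSqrt_mul_self hM]
  rw [← Matrix.mulVec_mulVec, Matrix.dotProduct_mulVec x]
  congr 1
  rw [← Matrix.vecMul_transpose, transpose_of_posSemidef hs]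

end OTAux
end Dev2

section Dev3
namespace OTAux
variable {n : ℕ}

lemma psdSqrt_mulVec_eq_zero_iff {M : Mat n} (hM : M.PosSemidef) (x : Fin n → ℝ) :
    psdSqrt M *ᵥ x = 0 ↔ M *ᵥ x = 0 := by
  constructor
  · intro h
    conv_lhs => rw [← psdSqrt_mul_self hM]
    rw [← Matrix.mulVec_mulVec, h, Matrix.mulVec_zero]
  · intro h
    have h0 : x ⬝ᵥ M *ᵥ x = 0 := by rw [h, dotProduct_zero]
    rw [dotProduct_psdSqrt_sq hM] at h0
    exact dotProduct_self_eq_zero.mp h0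

/-- The kernel of `psdSqrt M` equals the kernel of `M`. -/
lemma ker_psdSqrt {M : Mat n} (hM : M.PosSemidef) :
    LinearMap.ker (psdSqrt M).mulVecLin = LinearMap.ker M.mulVecLin := by
  ext x
  simpa using psdSqrt_mulVec_eq_zero_iff hM x

/-- range of psdSqrt M = range M -/
lemma range_psdSqrt {M : Mat n} (hM : M.PosSemidef) :
    LinearMap.range (psdSqrt M).mulVecLin = LinearMap.range M.mulVecLin := by
  conv_rhs => rw [← psdSqrt_mul_self hM]
  rw [← range_mul_transpose_self (psdSqrt M)]
  rw [transpose_of_posSemidef (psdSqrt_posSemidef hM)]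

end OTAux
end Dev3

section Dev4
namespace OTAux
variable {n : ℕ}

/-- Functional calculus of a real symmetric matrix. -/
noncomputable def fcal {K : Mat n} (hK : K.IsHermitian) (f : ℝ → ℝ) : Mat n :=
  (hK.eigenvectorUnitary : Mat n) * Matrix.diagonal (f ∘ hK.eigenvalues) *
    star (hK.eigenvectorUnitary : Mat n)

lemma fcal_mul {K : Mat n} (hK : K.IsHermitian) (f g : ℝ → ℝ) :
    fcal hK f * fcal hK g = fcal hK (fun x => f x * g x) := by
  unfold fcal
  have h1 : star (hK.eigenvectorUnitary : Mat n) * (hK.eigenvectorUnitary : Mat n) = 1 :=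
    Matrix.mem_unitaryGroup_iff'.mp hK.eigenvectorUnitary.2
  calc (hK.eigenvectorUnitary : Mat n) * Matrix.diagonal (f ∘ hK.eigenvalues) *
        star (hK.eigenvectorUnitary : Mat n) *
        ((hK.eigenvectorUnitary : Mat n) * Matrix.diagonal (g ∘ hK.eigenvalues) *
        star (hK.eigenvectorUnitary : Mat n))
      = (hK.eigenvectorUnitary : Mat n) * (Matrix.diagonal (f ∘ hK.eigenvalues) *
        ((star (hK.eigenvectorUnitary : Mat n) * (hK.eigenvectorUnitary : Mat n)) *
          Matrix.diagonal (g ∘ hK.eigenvalues))) *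
        star (hK.eigenvectorUnitary : Mat n) := by
        simp only [mul_assoc]
    _ = _ := by
        rw [h1, one_mul, Matrix.diagonal_mul_diagonal]
        rfl

lemma fcal_congr {K : Mat n} (hK : K.IsHermitian) {f g : ℝ → ℝ}
    (h : ∀ i, f (hK.eigenvalues i) = g (hK.eigenvalues i)) : fcal hK f = fcal hK g := by
  unfold fcal
  rw [show f ∘ hK.eigenvalues = g ∘ hK.eigenvalues from funext h]

lemma fcal_id {K : Mat n} (hK : K.IsHermitian) : fcal hK id = K := by
  unfold fcal
  conv_rhs => rw [hK.spectral_theorem]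
  congr 1

lemma fcal_posSemidef {K : Mat n} (hK : K.IsHermitian) {f : ℝ → ℝ}
    (h : ∀ i, 0 ≤ f (hK.eigenvalues i)) : (fcal hK f).PosSemidef := by
  unfold fcal
  rw [Matrix.star_eq_conjTranspose]
  exact (Matrix.posSemidef_diagonal_iff.mpr fun i => h i).mul_mul_conjTranspose_same _

end OTAux
end Dev4

section Dev5
namespace OTAux
variable {n : ℕ}

/-- Moore–Penrose pseudoinverse of a symmetric real matrix. -/
noncomputable def pinv {K : Mat n} (hK : K.IsHermitian) : Mat n := fcal hK (·⁻¹)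

lemma pinv_posSemidef {K : Mat n} (hK : K.PosSemidef) : (pinv hK.1).PosSemidef :=
  fcal_posSemidef _ (fun i => inv_nonneg.mpr (hK.eigenvalues_nonneg i))

lemma pinv_mul_sq_mul_pinv {K : Mat n} (hK : K.IsHermitian) :
    pinv hK * (K * K) * pinv hK = pinv hK * K := by
  have key : fcal hK (·⁻¹) * (fcal hK id * fcal hK id) * fcal hK (·⁻¹)
      = fcal hK (·⁻¹) * fcal hK id := by
    rw [fcal_mul, fcal_mul, fcal_mul, fcal_mul]
    apply fcal_congr
    intro i
    rcases eq_or_ne (hK.eigenvalues i) 0 with h | h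
    · simp [h]
    · simp only [id_eq]
      field_simp
  rw [fcal_id] at key
  exact key

lemma pinv_mul_mul {K : Mat n} (hK : K.IsHermitian) :
    pinv hK * K * K = K := by
  have key : fcal hK (·⁻¹) * fcal hK id * fcal hK id = fcal hK id := by
    rw [fcal_mul, fcal_mul]
    apply fcal_congr
    intro i
    rcases eq_or_ne (hK.eigenvalues i) 0 with h | h
    · simp [h]
    · simp only [id_eq]
      field_simp
  rw [fcal_id] at key
  exact key

lemma proj_fix {K : Mat n} (hK : K.IsHermitian) {y : Fin n → ℝ}
    (hy : y ∈ LinearMap.range K.mulVecLin) : (pinv hK * K) *ᵥ y = y := by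
  obtain ⟨x, rfl⟩ := hy
  simp only [Matrix.mulVecLin_apply]
  rw [Matrix.mulVec_mulVec, pinv_mul_mul hK]

lemma dotProduct_conj {R M : Mat n} (hR : Rᵀ = R) (x : Fin n → ℝ) :
    x ⬝ᵥ (R * M * R) *ᵥ x = (R *ᵥ x) ⬝ᵥ M *ᵥ (R *ᵥ x) := by
  rw [← Matrix.mulVec_mulVec, ← Matrix.mulVec_mulVec, Matrix.dotProduct_mulVec x]
  congr 1
  conv_rhs => rw [← Matrix.vecMul_transpose]
  rw [hR]

/-- Under condition (iv), `range (R*A*R) = range R` where `R = psdSqrt B`. -/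
lemma range_RAR {A B : Mat n} (hA : A.PosSemidef) (hB : B.PosSemidef)
    (h4 : LinearMap.range B.mulVecLin ⊓ LinearMap.ker A.mulVecLin = ⊥) :
    LinearMap.range (psdSqrt B * A * psdSqrt B).mulVecLin
      = LinearMap.range (psdSqrt B).mulVecLin := by
  set R := psdSqrt B with hRdef
  have hR : R.PosSemidef := psdSqrt_posSemidef hB
  have hker : LinearMap.ker (R * A * R).mulVecLin = LinearMap.ker R.mulVecLin := by
    ext x
    simp only [LinearMap.mem_ker, Matrix.mulVecLin_apply]
    constructor
    · intro h
      have hq : (R *ᵥ x) ⬝ᵥ A *ᵥ (R *ᵥ x) = 0 := by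
        rw [← dotProduct_conj (transpose_of_posSemidef hR), h, dotProduct_zero]
      have hAk : A *ᵥ (R *ᵥ x) = 0 := psd_mulVec_eq_zero hA hq
      have hmem : R *ᵥ x ∈ LinearMap.range B.mulVecLin ⊓ LinearMap.ker A.mulVecLin := by
        constructor
        · rw [← range_psdSqrt hB]
          exact ⟨x, rfl⟩
        · simpa using hAk
      rw [h4] at hmem
      simpa using hmem
    · intro h
      rw [← Matrix.mulVec_mulVec, ← Matrix.mulVec_mulVec, h]
      simp
  have hle : LinearMap.range (R * A * R).mulVecLin ≤ LinearMap.range R.mulVecLin := by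
    have : R * A * R = R * (A * R) := by simp only [mul_assoc]
    rw [this]
    exact range_mul_le _ _
  apply Submodule.eq_of_le_of_finrank_le hle
  have e1 := LinearMap.finrank_range_add_finrank_ker (R * A * R).mulVecLin
  have e2 := LinearMap.finrank_range_add_finrank_ker R.mulVecLin
  rw [hker] at e1
  omega

/-- (iv) → (i): construction of a psd transport matrix. -/
lemma construction {A B : Mat n} (hA : A.PosSemidef) (hB : B.PosSemidef)
    (h4 : LinearMap.range B.mulVecLin ⊓ LinearMap.ker A.mulVecLin = ⊥) :
    ∃ T : Mat n, T.PosSemidef ∧ T * A * Tᵀ = B := by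
  set R := psdSqrt B with hRdef
  have hR : R.PosSemidef := psdSqrt_posSemidef hB
  have hRAR : (R * A * R).PosSemidef := by
    have := hA.mul_mul_conjTranspose_same R
    rwa [show Rᴴ = R from hR.1] at this
  set K := psdSqrt (R * A * R) with hKdef
  have hK : K.PosSemidef := psdSqrt_posSemidef hRAR
  have hKK : K * K = R * A * R := psdSqrt_mul_self hRAR
  have hrange : LinearMap.range R.mulVecLin ≤ LinearMap.range K.mulVecLin := by
    rw [range_psdSqrt hRAR, range_RAR hA hB h4]
  set P := pinv hK.1 with hPdef
  have hP : P.PosSemidef := pinv_posSemidef hK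
  refine ⟨R * P * R, ?_, ?_⟩
  · have := hP.mul_mul_conjTranspose_same R
    rwa [show Rᴴ = R from hR.1] at this
  · have hT : (R * P * R)ᵀ = R * P * R := by
      have := hP.mul_mul_conjTranspose_same R
      rw [show Rᴴ = R from hR.1] at this
      exact transpose_of_posSemidef this
    rw [hT]
    have h1 : R * P * R * A * (R * P * R) = R * (P * (R * A * R) * P) * R := by
      simp only [mul_assoc]
    rw [h1, ← hKK, pinv_mul_sq_mul_pinv]
    have h2 : (pinv hK.1 * K) * R = R := by
      apply matrix_eq_of_mulVec_eq
      intro x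
      rw [← Matrix.mulVec_mulVec]
      exact proj_fix hK.1 (hrange ⟨x, rfl⟩)
    calc R * (pinv hK.1 * K) * R = R * ((pinv hK.1 * K) * R) := by
          simp only [mul_assoc]
      _ = R * R := by rw [h2]
      _ = B := psdSqrt_mul_self hB

end OTAux
end Dev5

section Dev6
namespace OTAux
variable {n : ℕ}

/-- Equality case: if `N Nᵀ = C²` and `tr N = tr C` with `C` psd, then `N = C`. -/
lemma eq_of_mulT_eq_sq {N C : Mat n} (hC : C.PosSemidef)
    (h1 : N * Nᵀ = C * C) (h2 : N.trace = C.trace) : N = C := by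
  set U : Mat n := (hC.1.eigenvectorUnitary : Mat n) with hUdef
  set d : Fin n → ℝ := hC.1.eigenvalues with hddef
  have hsU : star U = Uᵀ := by
    rw [Matrix.star_eq_conjTranspose, Matrix.conjTranspose_eq_transpose_of_trivial]
  have hU1 : U * Uᵀ = 1 := by
    rw [← hsU]; exact Matrix.mem_unitaryGroup_iff.mp hC.1.eigenvectorUnitary.2
  have hU2 : Uᵀ * U = 1 := by
    rw [← hsU]; exact Matrix.mem_unitaryGroup_iff'.mp hC.1.eigenvectorUnitary.2
  have hspec : C = U * Matrix.diagonal d * Uᵀ := by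
    have := hC.1.spectral_theorem
    rw [Unitary.conjStarAlgAut_apply, hsU] at this
    simpa [RCLike.ofReal_real_eq_id] using this
  have hD : Uᵀ * C * U = Matrix.diagonal d := by
    rw [hspec]
    calc Uᵀ * (U * Matrix.diagonal d * Uᵀ) * U
        = (Uᵀ * U) * Matrix.diagonal d * (Uᵀ * U) := by simp only [mul_assoc]
      _ = Matrix.diagonal d := by rw [hU2, one_mul, mul_one]
  set N' : Mat n := Uᵀ * N * U with hN'def
  have hN't : N'ᵀ = Uᵀ * Nᵀ * U := by
    rw [hN'def, Matrix.transpose_mul, Matrix.transpose_mul, Matrix.transpose_transpose]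
    simp only [mul_assoc]
  have key1 : N' * N'ᵀ = Matrix.diagonal d * Matrix.diagonal d := by
    rw [hN't, hN'def]
    calc Uᵀ * N * U * (Uᵀ * Nᵀ * U)
        = Uᵀ * (N * (U * Uᵀ) * Nᵀ) * U := by simp only [mul_assoc]
      _ = Uᵀ * (N * Nᵀ) * U := by rw [hU1, mul_one]
      _ = Uᵀ * (C * C) * U := by rw [h1]
      _ = (Uᵀ * C * U) * (Uᵀ * C * U) := by
          have h5 : (Uᵀ * C * U) * (Uᵀ * C * U) = Uᵀ * (C * (U * Uᵀ) * C) * U := by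
            simp only [mul_assoc]
          rw [h5, hU1, mul_one]
      _ = _ := by rw [hD]
  have key2 : N'.trace = C.trace := by
    rw [hN'def, Matrix.trace_mul_cycle, hU1, one_mul]
    exact h2
  have htrD : C.trace = ∑ i, d i := by
    rw [hspec, Matrix.trace_mul_cycle, hU2, one_mul, Matrix.trace_diagonal]
  have hrow : ∀ i, ∑ j, (N' i j) ^ 2 = (d i) ^ 2 := by
    intro i
    have e := congrFun (congrFun key1 i) i
    rw [Matrix.diagonal_mul_diagonal] at e
    simp only [Matrix.mul_apply, Matrix.transpose_apply, Matrix.diagonal_apply_eq] at e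
    simpa [pow_two] using e
  have hdnn : ∀ i, 0 ≤ d i := fun i => hC.eigenvalues_nonneg i
  have hdiag_le : ∀ i, N' i i ≤ d i := by
    intro i
    have h := Finset.single_le_sum (f := fun j => (N' i j) ^ 2)
      (fun j _ => sq_nonneg _) (Finset.mem_univ i)
    rw [hrow i] at h
    nlinarith [hdnn i, sq_nonneg (N' i i - d i), sq_nonneg (N' i i + d i)]
  have hsum : ∑ i, N' i i = ∑ i, d i := by
    have : N'.trace = ∑ i, d i := key2.trans htrD
    simpa [Matrix.trace, Matrix.diag] using this
  have hdiag : ∀ i, N' i i = d i := by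
    intro i
    have := (Finset.sum_eq_sum_iff_of_le (fun i _ => hdiag_le i)).mp hsum
    exact this i (Finset.mem_univ i)
  have hoff : ∀ i j, j ≠ i → N' i j = 0 := by
    intro i j hij
    have hsplit := hrow i
    rw [← Finset.sum_erase_add Finset.univ (fun k => N' i k ^ 2) (Finset.mem_univ i)] at hsplit
    rw [hdiag i] at hsplit
    have hzero : ∑ k ∈ Finset.univ.erase i, (N' i k) ^ 2 = 0 := by linarith
    have := (Finset.sum_eq_zero_iff_of_nonneg (fun k _ => sq_nonneg (N' i k))).mp hzero
      j (Finset.mem_erase.mpr ⟨hij, Finset.mem_univ j⟩)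
    exact pow_eq_zero_iff two_ne_zero |>.mp this
  have hN'D : N' = Matrix.diagonal d := by
    ext i j
    rcases eq_or_ne i j with rfl | h
    · rw [Matrix.diagonal_apply_eq]; exact hdiag i
    · rw [Matrix.diagonal_apply_ne _ h]
      exact hoff i j (Ne.symm h)
  have : U * N' * Uᵀ = N := by
    rw [hN'def]
    calc U * (Uᵀ * N * U) * Uᵀ = (U * Uᵀ) * N * (U * Uᵀ) := by simp only [mul_assoc]
      _ = N := by rw [hU1, one_mul, mul_one]
  rw [← this, hN'D, ← hspec]

end OTAux
end Dev6

section Dev7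
namespace OTAux
variable {n : ℕ}

lemma SBS_posSemidef {A B : Mat n} (hA : A.PosSemidef) (hB : B.PosSemidef) :
    (psdSqrt A * B * psdSqrt A).PosSemidef := by
  have hS : (psdSqrt A).PosSemidef := psdSqrt_posSemidef hA
  have := hB.mul_mul_conjTranspose_same (psdSqrt A)
  rwa [show (psdSqrt A)ᴴ = psdSqrt A from hS.1] at this

lemma trace_A_mul {A : Mat n} (hA : A.PosSemidef) (T : Mat n) :
    (A * T).trace = (psdSqrt A * T * psdSqrt A).trace := by
  set S := psdSqrt A
  conv_lhs => rw [← psdSqrt_mul_self hA]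
  rw [Matrix.trace_mul_cycle S S T, Matrix.trace_mul_cycle T S S]

/-- A psd transport matrix is automatically optimal. -/
lemma isOT_of_psd {A B T : Mat n} (hA : A.PosSemidef) (hB : B.PosSemidef)
    (hT : T.PosSemidef) (hTAT : T * A * Tᵀ = B) : IsOT A B T := by
  set S := psdSqrt A with hSdef
  have hS : S.PosSemidef := psdSqrt_posSemidef hA
  have hX : (S * T * S).PosSemidef := by
    have := hT.mul_mul_conjTranspose_same S
    rwa [show Sᴴ = S from hS.1] at this
  have hXX : (S * T * S) * (S * T * S) = S * B * S := by
    have h1 : (S * T * S) * (S * T * S) = S * (T * (S * S) * Tᵀ) * S := by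
      rw [transpose_of_posSemidef hT]
      simp only [mul_assoc]
    rw [h1, psdSqrt_mul_self hA, hTAT]
  have hXeq : S * T * S = psdSqrt (S * B * S) :=
    eq_psdSqrt hX (SBS_posSemidef hA hB) hXX
  refine ⟨hTAT, ?_⟩
  rw [trace_A_mul hA, hXeq]
  rfl

/-- For any OT matrix `T`: `S T S = √(S B S)`. -/
lemma STS_of_isOT {A B T : Mat n} (hA : A.PosSemidef) (hB : B.PosSemidef)
    (hT : IsOT A B T) :
    psdSqrt A * T * psdSqrt A = psdSqrt (psdSqrt A * B * psdSqrt A) := by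
  set S := psdSqrt A with hSdef
  have hS : S.PosSemidef := psdSqrt_posSemidef hA
  set C := psdSqrt (S * B * S) with hCdef
  have hC : C.PosSemidef := psdSqrt_posSemidef (SBS_posSemidef hA hB)
  apply eq_of_mulT_eq_sq hC
  · have hTr : (S * T * S)ᵀ = S * Tᵀ * S := by
      rw [Matrix.transpose_mul, Matrix.transpose_mul, transpose_of_posSemidef hS]
      simp only [mul_assoc]
    rw [hTr]
    have h1 : (S * T * S) * (S * Tᵀ * S) = S * (T * (S * S) * Tᵀ) * S := by
      simp only [mul_assoc]
    rw [h1, psdSqrt_mul_self hA, hT.1]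
    exact (psdSqrt_mul_self (SBS_posSemidef hA hB)).symm
  · rw [← trace_A_mul hA]
    exact hT.2

end OTAux
end Dev7

section Dev8
namespace OTAux
variable {n : ℕ}

/-- Under (iv), any two OT matrices agree after multiplication by `A`. -/
lemma OT_unique {A B : Mat n} (hA : A.PosSemidef) (hB : B.PosSemidef)
    (h4 : LinearMap.range B.mulVecLin ⊓ LinearMap.ker A.mulVecLin = ⊥)
    {T₁ T₂ : Mat n} (h1 : IsOT A B T₁) (h2 : IsOT A B T₂) : T₁ * A = T₂ * A := by
  set S := psdSqrt A with hSdef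
  have hS : S.PosSemidef := psdSqrt_posSemidef hA
  have hSTA : ∀ T : Mat n, IsOT A B T →
      S * (T * A) = psdSqrt (S * B * S) * S := by
    intro T hT
    have h1' : S * (T * A) = (S * T * S) * S := by
      conv_lhs => rw [← psdSqrt_mul_self hA]
      simp only [mul_assoc]
      rfl
    rw [h1', STS_of_isOT hA hB hT]
  have hcol : ∀ T : Mat n, IsOT A B T → ∀ x : Fin n → ℝ,
      (T * A) *ᵥ x ∈ LinearMap.range B.mulVecLin := by
    intro T hT x
    have hTS : (T * S) * (T * S)ᵀ = B := by
      rw [Matrix.transpose_mul, transpose_of_posSemidef hS]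
      have h3 : T * S * (S * Tᵀ) = T * (S * S) * Tᵀ := by simp only [mul_assoc]
      rw [h3, psdSqrt_mul_self hA, hT.1]
    have hr : LinearMap.range B.mulVecLin = LinearMap.range (T * S).mulVecLin := by
      rw [← hTS]; exact range_mul_transpose_self _
    rw [hr]
    refine ⟨S *ᵥ x, ?_⟩
    rw [Matrix.mulVecLin_apply, Matrix.mulVec_mulVec]
    congr 1
    conv_rhs => rw [← psdSqrt_mul_self hA]
    simp only [mul_assoc]
    rfl
  apply matrix_eq_of_mulVec_eq
  intro x
  have hmem : (T₁ * A) *ᵥ x - (T₂ * A) *ᵥ x ∈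
      LinearMap.range B.mulVecLin ⊓ LinearMap.ker A.mulVecLin := by
    constructor
    · exact sub_mem (hcol T₁ h1 x) (hcol T₂ h2 x)
    · have hs : S *ᵥ ((T₁ * A) *ᵥ x - (T₂ * A) *ᵥ x) = 0 := by
        rw [Matrix.mulVec_sub, Matrix.mulVec_mulVec, Matrix.mulVec_mulVec,
          hSTA T₁ h1, hSTA T₂ h2, sub_self]
      have hAy : ∀ y, A *ᵥ y = S *ᵥ (S *ᵥ y) := fun y => by
        rw [Matrix.mulVec_mulVec, psdSqrt_mul_self hA]
      have : A *ᵥ ((T₁ * A) *ᵥ x - (T₂ * A) *ᵥ x) = 0 := by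
        rw [hAy, hs, Matrix.mulVec_zero]
      simpa using this
  rw [h4] at hmem
  have h0 := (Submodule.mem_bot ℝ).mp hmem
  rwa [sub_eq_zero] at h0
end OTAux
end Dev8

section Dev9
namespace OTAux
variable {n : ℕ}

/-- (i) → (iv). -/
lemma psd_imp_four {A B T : Mat n} (hA : A.PosSemidef) (hT : T.PosSemidef)
    (hTAT : T * A * Tᵀ = B) :
    LinearMap.range B.mulVecLin ⊓ LinearMap.ker A.mulVecLin = ⊥ := by
  rw [Submodule.eq_bot_iff]
  rintro v ⟨⟨y, rfl⟩, hvker⟩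
  simp only [Matrix.mulVecLin_apply] at *
  set v := B *ᵥ y with hvdef
  have hvker' : A *ᵥ v = 0 := hvker
  set u := Tᵀ *ᵥ y with hudef
  have hv : v = T *ᵥ (A *ᵥ u) := by
    rw [hvdef, ← hTAT, hudef, Matrix.mulVec_mulVec, Matrix.mulVec_mulVec]
  have hip : (A *ᵥ u) ⬝ᵥ T *ᵥ (A *ᵥ u) = 0 := by
    rw [← hv]
    have e1 : (A *ᵥ u) ⬝ᵥ v = u ⬝ᵥ (A *ᵥ v) := by
      rw [Matrix.dotProduct_mulVec u]
      congr 1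
      conv_lhs => rw [← transpose_of_posSemidef hA, Matrix.mulVec_transpose]
    rw [e1, hvker', dotProduct_zero]
  have := psd_mulVec_eq_zero hT hip
  rw [hv, this]

/-- helpers for rank-one perturbations. -/
lemma vecMulVec_mul (v u : Fin n → ℝ) (M : Mat n) :
    Matrix.vecMulVec v u * M = Matrix.vecMulVec v (Mᵀ *ᵥ u) := by
  ext i j
  simp only [Matrix.mul_apply, Matrix.vecMulVec_apply, Matrix.mulVec, Matrix.transpose_apply,
    dotProduct, Finset.mul_sum]
  exact Finset.sum_congr rfl fun k _ => by ring

lemma mul_vecMulVec (v u : Fin n → ℝ) (M : Mat n) :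
    M * Matrix.vecMulVec v u = Matrix.vecMulVec (M *ᵥ v) u := by
  ext i j
  simp only [Matrix.mul_apply, Matrix.vecMulVec_apply, Matrix.mulVec,
    dotProduct, Finset.sum_mul]
  exact Finset.sum_congr rfl fun k _ => by ring

lemma vecMulVec_transpose (v u : Fin n → ℝ) :
    (Matrix.vecMulVec v u)ᵀ = Matrix.vecMulVec u v := by
  ext i j
  simp [Matrix.vecMulVec_apply, mul_comm]

lemma vecMulVec_mul_vecMulVec (a b c d : Fin n → ℝ) :
    Matrix.vecMulVec a b * Matrix.vecMulVec c d = (b ⬝ᵥ c) • Matrix.vecMulVec a d := by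
  ext i j
  simp only [Matrix.mul_apply, Matrix.vecMulVec_apply, Matrix.smul_apply, dotProduct,
    smul_eq_mul, Finset.sum_mul, Finset.mul_sum]
  exact Finset.sum_congr rfl fun k _ => by ring

lemma trace_mul_vecMulVec (M : Mat n) (v u : Fin n → ℝ) :
    (M * Matrix.vecMulVec v u).trace = (M *ᵥ v) ⬝ᵥ u := by
  rw [mul_vecMulVec]
  simp [Matrix.trace, Matrix.diag, Matrix.vecMulVec_apply, dotProduct]

end OTAux
end Dev9

section Dev10
namespace OTAux
variable {n : ℕ}

lemma vecMulVec_smul_right (a : Fin n → ℝ) (c : ℝ) (b : Fin n → ℝ) :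
    Matrix.vecMulVec a (c • b) = c • Matrix.vecMulVec a b := by
  ext i j
  simp [Matrix.vecMulVec_apply, mul_comm, mul_left_comm]

lemma vecMulVec_smul_left (a : Fin n → ℝ) (c : ℝ) (b : Fin n → ℝ) :
    Matrix.vecMulVec (c • a) b = c • Matrix.vecMulVec a b := by
  ext i j
  simp [Matrix.vecMulVec_apply, mul_comm, mul_left_comm]

lemma vecMulVec_zero_left (b : Fin n → ℝ) :
    Matrix.vecMulVec (0 : Fin n → ℝ) b = 0 := by
  ext i j
  simp [Matrix.vecMulVec_apply]

/-- (ii) → (iv). -/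
lemma two_imp_four {A B : Mat n} (hA : A.PosSemidef) (hB : B.PosSemidef)
    (hex : ∃ T : Mat n, IsOT A B T)
    (huniq : ∀ T₁ T₂ : Mat n, IsOT A B T₁ → IsOT A B T₂ → T₁ * A = T₂ * A) :
    LinearMap.range B.mulVecLin ⊓ LinearMap.ker A.mulVecLin = ⊥ := by
  by_contra hne
  obtain ⟨v, hvmem, hvne⟩ := Submodule.ne_bot_iff _ |>.mp hne
  obtain ⟨T, hT⟩ := hex
  obtain ⟨⟨y, hy⟩, hvk⟩ := hvmem
  simp only [Matrix.mulVecLin_apply, LinearMap.mem_ker] at hy hvk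
  have hAv : A *ᵥ v = 0 := hvk
  set u : Fin n → ℝ := Tᵀ *ᵥ y with hudef
  have hv : v = T *ᵥ (A *ᵥ u) := by
    rw [← hy, ← hT.1, hudef, Matrix.mulVec_mulVec, Matrix.mulVec_mulVec]
  have hAu : A *ᵥ u ≠ 0 := by
    intro h
    rw [h, Matrix.mulVec_zero] at hv
    exact hvne hv
  set α : ℝ := u ⬝ᵥ A *ᵥ u with hαdef
  have hα : α ≠ 0 := by
    intro h
    exact hAu (psd_mulVec_eq_zero hA (show u ⬝ᵥ A *ᵥ u = 0 from h))
  set s : ℝ := -2 / α with hsdef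
  have hs : s ≠ 0 := div_ne_zero (by norm_num) hα
  set w : Fin n → ℝ := s • u with hwdef
  set E : Mat n := Matrix.vecMulVec v w with hEdef
  -- transport property of the perturbed matrix
  have hAw : A *ᵥ w = s • (A *ᵥ u) := by rw [hwdef, Matrix.mulVec_smul]
  have hEA : E * A = Matrix.vecMulVec v (A *ᵥ w) := by
    rw [hEdef, vecMulVec_mul, transpose_of_posSemidef hA]
  have hEATt : E * A * Tᵀ = s • Matrix.vecMulVec v v := by
    rw [hEA, vecMulVec_mul, Matrix.transpose_transpose, hAw, Matrix.mulVec_smul, ← hv,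
      vecMulVec_smul_right]
  have hTAEt : T * A * Eᵀ = s • Matrix.vecMulVec v v := by
    rw [hEdef, vecMulVec_transpose, mul_vecMulVec, ← Matrix.mulVec_mulVec, hAw,
      Matrix.mulVec_smul, ← hv, vecMulVec_smul_left]
  have hEAEt : E * A * Eᵀ = (s * s * α) • Matrix.vecMulVec v v := by
    rw [hEA, hEdef, vecMulVec_transpose, vecMulVec_mul_vecMulVec, hAw, hwdef]
    have : (s • (A *ᵥ u)) ⬝ᵥ (s • u) = s * s * α := by
      rw [smul_dotProduct, dotProduct_smul, dotProduct_comm, ← hαdef,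
        smul_eq_mul, smul_eq_mul]
      ring
    rw [this]
  have hT' : IsOT A B (T + E) := by
    constructor
    · have expand : (T + E) * A * (T + E)ᵀ
          = T * A * Tᵀ + (E * A * Tᵀ + T * A * Eᵀ + E * A * Eᵀ) := by
        rw [Matrix.transpose_add]
        noncomm_ring
      rw [expand, hEATt, hTAEt, hEAEt, ← add_smul, ← add_smul]
      have hc : s + s + s * s * α = 0 := by
        rw [hsdef]
        field_simp
        ring
      rw [hc, zero_smul, add_zero, hT.1]
    · have hAE : A * E = 0 := by
        rw [hEdef, mul_vecMulVec, hAv, vecMulVec_zero_left]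
      rw [mul_add, hAE, add_zero]
      exact hT.2
  -- contradiction with uniqueness
  have heq := huniq T (T + E) hT hT'
  rw [add_mul] at heq
  have hEA0 : E * A = 0 := by
    have := heq.symm
    rwa [add_eq_left] at this
  rw [hEA, hAw, vecMulVec_smul_right] at hEA0
  obtain ⟨i, hi⟩ := Function.ne_iff.mp hvne
  obtain ⟨j, hj⟩ := Function.ne_iff.mp hAu
  have := congrFun (congrFun hEA0 i) j
  simp only [Matrix.smul_apply, Matrix.vecMulVec_apply, Matrix.zero_apply, smul_eq_mul] at this
  rcases mul_eq_zero.mp this with h | h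
  · exact hs h
  · rcases mul_eq_zero.mp h with h' | h'
    · exact hi h'
    · exact hj h'

end OTAux
end Dev10

section Dev11
namespace OTAux
variable {n : ℕ}

lemma four_imp_three {A B : Mat n} (hA : A.PosSemidef) (hB : B.PosSemidef)
    (h4 : LinearMap.range B.mulVecLin ⊓ LinearMap.ker A.mulVecLin = ⊥) :
    LinearMap.range B.mulVecLin = LinearMap.range (B * A).mulVecLin := by
  have hker : LinearMap.ker (A * B).mulVecLin = LinearMap.ker B.mulVecLin := by
    ext x
    simp only [LinearMap.mem_ker, Matrix.mulVecLin_apply, ← Matrix.mulVec_mulVec]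
    constructor
    · intro h
      have hmem : B *ᵥ x ∈ LinearMap.range B.mulVecLin ⊓ LinearMap.ker A.mulVecLin :=
        ⟨⟨x, rfl⟩, by simpa using h⟩
      rw [h4] at hmem
      simpa using hmem
    · intro h
      rw [h, Matrix.mulVec_zero]
  have hBA : B * A = (A * B)ᵀ := by
    rw [Matrix.transpose_mul, transpose_of_posSemidef hA, transpose_of_posSemidef hB]
  have hrank : (B * A).rank = B.rank := by
    rw [hBA, Matrix.rank_transpose]
    have e1 := LinearMap.finrank_range_add_finrank_ker (A * B).mulVecLin
    have e2 := LinearMap.finrank_range_add_finrank_ker B.mulVecLin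
    rw [hker] at e1
    unfold Matrix.rank
    omega
  refine (Submodule.eq_of_le_of_finrank_le (range_mul_le B A) ?_).symm
  have : Module.finrank ℝ (LinearMap.range (B * A).mulVecLin) = (B * A).rank := rfl
  rw [this, hrank]
  rfl

lemma three_imp_four {A B : Mat n} (hA : A.PosSemidef) (hB : B.PosSemidef)
    (h3 : LinearMap.range B.mulVecLin = LinearMap.range (B * A).mulVecLin) :
    LinearMap.range B.mulVecLin ⊓ LinearMap.ker A.mulVecLin = ⊥ := by
  have hBA : B * A = (A * B)ᵀ := by
    rw [Matrix.transpose_mul, transpose_of_posSemidef hA, transpose_of_posSemidef hB]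
  have hrank : (A * B).rank = B.rank := by
    rw [← Matrix.rank_transpose, ← hBA]
    unfold Matrix.rank
    rw [← h3]
  have hkerle : LinearMap.ker B.mulVecLin ≤ LinearMap.ker (A * B).mulVecLin := by
    intro x hx
    simp only [LinearMap.mem_ker, Matrix.mulVecLin_apply, ← Matrix.mulVec_mulVec] at *
    rw [hx, Matrix.mulVec_zero]
  have hker : LinearMap.ker B.mulVecLin = LinearMap.ker (A * B).mulVecLin := by
    apply Submodule.eq_of_le_of_finrank_le hkerle
    have e1 := LinearMap.finrank_range_add_finrank_ker (A * B).mulVecLin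
    have e2 := LinearMap.finrank_range_add_finrank_ker B.mulVecLin
    have h1 : Module.finrank ℝ (LinearMap.range (A * B).mulVecLin) = (A * B).rank := rfl
    have h2 : Module.finrank ℝ (LinearMap.range B.mulVecLin) = B.rank := rfl
    rw [h1] at e1
    rw [h2] at e2
    omega
  rw [Submodule.eq_bot_iff]
  rintro v ⟨⟨x, rfl⟩, hk⟩
  simp only [Matrix.mulVecLin_apply, LinearMap.mem_ker] at *
  have hx : x ∈ LinearMap.ker (A * B).mulVecLin := by
    simp only [LinearMap.mem_ker, Matrix.mulVecLin_apply, ← Matrix.mulVec_mulVec]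
    exact hk
  rw [← hker] at hx
  simpa using hx

end OTAux
end Dev11


/-- For psd `A, B`, the following are equivalent:
(i) a psd transport matrix from `A` to `B` exists;
(ii) an OT matrix exists and all OT matrices agree on `range A`;
(iii) `range B = range (B·A)`;
(iv) `range B ∩ ker A = {0}`. -/
theorem stmt3 {n : ℕ} (A B : Matrix (Fin n) (Fin n) ℝ)
    (hA : A.PosSemidef) (hB : B.PosSemidef) :
    [ (∃ T : Matrix (Fin n) (Fin n) ℝ, T.PosSemidef ∧ T * A * Tᵀ = B),
      ((∃ T : Matrix (Fin n) (Fin n) ℝ, IsOT A B T) ∧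
        ∀ T₁ T₂ : Matrix (Fin n) (Fin n) ℝ, IsOT A B T₁ → IsOT A B T₂ → T₁ * A = T₂ * A),
      (LinearMap.range B.mulVecLin = LinearMap.range (B * A).mulVecLin),
      (LinearMap.range B.mulVecLin ⊓ LinearMap.ker A.mulVecLin = ⊥) ].TFAE := by
  tfae_have 1 → 4 := by
    rintro ⟨T, hT, hTAT⟩
    exact OTAux.psd_imp_four hA hT hTAT
  tfae_have 4 → 1 := by
    intro h4
    exact OTAux.construction hA hB h4
  tfae_have 4 → 3 := fun h4 => OTAux.four_imp_three hA hB h4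
  tfae_have 3 → 4 := fun h3 => OTAux.three_imp_four hA hB h3
  tfae_have 4 → 2 := by
    intro h4
    obtain ⟨T, hT, hTAT⟩ := OTAux.construction hA hB h4
    exact ⟨⟨T, OTAux.isOT_of_psd hA hB hT hTAT⟩,
      fun T₁ T₂ h1 h2 => OTAux.OT_unique hA hB h4 h1 h2⟩
  tfae_have 2 → 4 := fun h2 => OTAux.two_imp_four hA hB h2.1 h2.2
  tfae_finish
end
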